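/- arXiv:2501.01053 — 3 statements merged into one kernel-verified Lean document; each statement's English description precedes it below -/
import Mathlib

section
/- The map R ↦ Tr[(Σ⁻¹ + c·R)⁻¹] is strictly convex on the set of Hermitian positive semidefinite matrices R, where Σ is a fixed Hermitian positive definite matrix and c > 0 is a constant. That is, for Hermitian positive semidefinite R₁ ≠ R₂ and t ∈ (0,1), Tr[(Σ⁻¹ + c(tR₁ + (1−t)R₂))⁻¹] < t·Tr[(Σ⁻¹ + cR₁)⁻¹] + (1−t)·Tr[(Σ⁻¹ + cR₂)⁻¹]. -/
open Matrix
open scoped ComplexOrder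

private lemma trace_form {n : ℕ} (M D : Matrix (Fin n) (Fin n) ℂ) :
    (Dᴴ * M * D).trace = ∑ j, star (fun i => D i j) ⬝ᵥ M *ᵥ (fun i => D i j) := by
  simp only [Matrix.trace, Matrix.diag, Matrix.mul_apply, dotProduct, mulVec,
    conjTranspose_apply, Finset.sum_mul, Finset.mul_sum]
  refine Finset.sum_congr rfl fun j _ => ?_
  rw [Finset.sum_comm]
  refine Finset.sum_congr rfl fun i _ => Finset.sum_congr rfl fun k _ => by rw [Pi.star_apply]; ring

private lemma smul_psd {n : ℕ} {c : ℝ} (hc : 0 ≤ c)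
    {R : Matrix (Fin n) (Fin n) ℂ} (hR : R.PosSemidef) :
    ((c : ℂ) • R).PosSemidef := by
  refine PosSemidef.of_dotProduct_mulVec_nonneg ?_ ?_
  · show ((c : ℂ) • R)ᴴ = _
    rw [conjTranspose_smul, hR.1.eq]
    simp [Complex.conj_ofReal]
  · intro x
    rw [Matrix.smul_mulVec, dotProduct_smul, smul_eq_mul]
    exact mul_nonneg (by exact_mod_cast hc) (hR.dotProduct_mulVec_nonneg x)

private lemma trace_conj_nonneg {n : ℕ} {M : Matrix (Fin n) (Fin n) ℂ} (hM : M.PosSemidef)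
    (D : Matrix (Fin n) (Fin n) ℂ) : 0 ≤ ((Dᴴ * M * D).trace).re := by
  have h : (0:ℂ) ≤ (Dᴴ * M * D).trace := by
    rw [trace_form]
    exact Finset.sum_nonneg fun j _ => hM.dotProduct_mulVec_nonneg _
  exact (Complex.le_def.mp h).1

private lemma trace_conj_pos {n : ℕ} {M : Matrix (Fin n) (Fin n) ℂ} (hM : M.PosDef)
    {D : Matrix (Fin n) (Fin n) ℂ} (hD : D ≠ 0) : 0 < ((Dᴴ * M * D).trace).re := by
  obtain ⟨i₀, j₀, h0⟩ : ∃ i j, D i j ≠ 0 := by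
    by_contra h; push_neg at h; exact hD (by ext i j; exact h i j)
  have h : (0:ℂ) < (Dᴴ * M * D).trace := by
    rw [trace_form]
    have : ∀ j ∈ Finset.univ, (0:ℂ) ≤ star (fun i => D i j) ⬝ᵥ M *ᵥ (fun i => D i j) :=
      fun j _ => hM.posSemidef.dotProduct_mulVec_nonneg _
    refine lt_of_lt_of_le ?_ (Finset.single_le_sum this (Finset.mem_univ j₀))
    exact hM.dotProduct_mulVec_pos (fun hv => h0 (congrFun hv i₀))
  exact (Complex.lt_def.mp h).1

private lemma key_identity {n : ℕ} {M X : Matrix (Fin n) (Fin n) ℂ} (hM : M.PosDef)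
    (hX : Xᴴ = X) :
    (((X - M⁻¹)ᴴ * M * (X - M⁻¹)).trace).re
      = ((M⁻¹).trace).re - (2 * X.trace - (Xᴴ * M * X).trace).re := by
  have hdet : IsUnit M.det := M.isUnit_iff_isUnit_det.mp hM.isUnit
  have h1 : M * M⁻¹ = 1 := Matrix.mul_nonsing_inv M hdet
  have h2 : M⁻¹ * M = 1 := Matrix.nonsing_inv_mul M hdet
  have hMinvH : (M⁻¹)ᴴ = M⁻¹ := hM.inv.1
  have hDH : (X - M⁻¹)ᴴ = X - M⁻¹ := by rw [conjTranspose_sub, hX, hMinvH]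
  have h1' : ∀ Y : Matrix (Fin n) (Fin n) ℂ, Y * M * M⁻¹ = Y := fun Y => by
    rw [Matrix.mul_assoc, h1, Matrix.mul_one]
  have h2' : ∀ Y : Matrix (Fin n) (Fin n) ℂ, M⁻¹ * (M * Y) = Y := fun Y => by
    rw [← Matrix.mul_assoc, h2, Matrix.one_mul]
  have hexp : (X - M⁻¹)ᴴ * M * (X - M⁻¹) = Xᴴ * M * X - X - X + M⁻¹ := by
    rw [hDH, hX, sub_mul, sub_mul, mul_sub, mul_sub, h2, h1' X,
      Matrix.mul_assoc X M X]
    simp only [Matrix.one_mul]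
    abel
  have htr : ((X - M⁻¹)ᴴ * M * (X - M⁻¹)).trace
      = (Xᴴ * M * X).trace - 2 * X.trace + (M⁻¹).trace := by
    rw [hexp, trace_add, trace_sub, trace_sub]; ring
  rw [htr]
  simp [Complex.add_re, Complex.sub_re, Complex.mul_re]
  ring

private lemma key_le {n : ℕ} {M X : Matrix (Fin n) (Fin n) ℂ} (hM : M.PosDef)
    (hX : Xᴴ = X) :
    (2 * X.trace - (Xᴴ * M * X).trace).re ≤ ((M⁻¹).trace).re := by
  have := trace_conj_nonneg hM.posSemidef (X - M⁻¹)
  rw [key_identity hM hX] at this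
  linarith

private lemma key_lt {n : ℕ} {M X : Matrix (Fin n) (Fin n) ℂ} (hM : M.PosDef)
    (hX : Xᴴ = X) (hne : X ≠ M⁻¹) :
    (2 * X.trace - (Xᴴ * M * X).trace).re < ((M⁻¹).trace).re := by
  have := trace_conj_pos hM (sub_ne_zero.mpr hne)
  rw [key_identity hM hX] at this
  linarith

/-- The map `R ↦ Tr[(Σ⁻¹ + c·R)⁻¹]` is strictly convex on Hermitian positive semidefinite
matrices, for `Σ` Hermitian positive definite and `c > 0`. -/
theorem stmt_1 {n : ℕ} (S : Matrix (Fin n) (Fin n) ℂ) (hS : S.PosDef)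
    (c : ℝ) (hc : 0 < c)
    (R₁ R₂ : Matrix (Fin n) (Fin n) ℂ) (hR₁ : R₁.PosSemidef) (hR₂ : R₂.PosSemidef)
    (hne : R₁ ≠ R₂) (t : ℝ) (ht0 : 0 < t) (ht1 : t < 1) :
    (((S⁻¹ + (c : ℂ) • ((t : ℂ) • R₁ + ((1 - t : ℝ) : ℂ) • R₂))⁻¹).trace).re
      < t * (((S⁻¹ + (c : ℂ) • R₁)⁻¹).trace).re
        + (1 - t) * (((S⁻¹ + (c : ℂ) • R₂)⁻¹).trace).re := by
  set A := S⁻¹ + (c : ℂ) • R₁ with hAdef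
  set B := S⁻¹ + (c : ℂ) • R₂ with hBdef
  set C := S⁻¹ + (c : ℂ) • ((t : ℂ) • R₁ + ((1 - t : ℝ) : ℂ) • R₂) with hCdef
  have hA : A.PosDef := hS.inv.add_posSemidef (smul_psd hc.le hR₁)
  have hB : B.PosDef := hS.inv.add_posSemidef (smul_psd hc.le hR₂)
  have hC : C.PosDef := hS.inv.add_posSemidef
    (smul_psd hc.le ((smul_psd ht0.le hR₁).add (smul_psd (by linarith) hR₂)))
  have hcomb : C = (t : ℂ) • A + ((1 - t : ℝ) : ℂ) • B := by
    rw [hAdef, hBdef, hCdef]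
    push_cast
    module
  set X := C⁻¹ with hXdef
  have hXH : Xᴴ = X := hC.inv.1
  -- X ≠ A⁻¹ ∨ X ≠ B⁻¹
  have hor : X ≠ A⁻¹ ∨ X ≠ B⁻¹ := by
    by_contra h
    push_neg at h
    have hAB : A = B := by
      have : A⁻¹ = B⁻¹ := h.1 ▸ h.2
      calc A = (A⁻¹)⁻¹ := (Matrix.nonsing_inv_nonsing_inv A
            (A.isUnit_iff_isUnit_det.mp hA.isUnit)).symm
        _ = (B⁻¹)⁻¹ := by rw [this]
        _ = B := Matrix.nonsing_inv_nonsing_inv B (B.isUnit_iff_isUnit_det.mp hB.isUnit)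
    have : (c : ℂ) • R₁ = (c : ℂ) • R₂ := by
      have := hAB
      rw [hAdef, hBdef] at this
      exact add_left_cancel this
    exact hne (smul_right_injective _ (by exact_mod_cast hc.ne') this)
  -- trace of C⁻¹ via the variational expression
  have hdetC : IsUnit C.det := C.isUnit_iff_isUnit_det.mp hC.isUnit
  have hXCX : Xᴴ * C * X = C⁻¹ := by
    rw [hXH, hXdef, Matrix.nonsing_inv_mul C hdetC, Matrix.one_mul]
  have htrC : ((C⁻¹).trace).re = (2 * X.trace - (Xᴴ * C * X).trace).re := by
    rw [hXCX, hXdef]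
    have : (2 : ℂ) * (C⁻¹).trace - (C⁻¹).trace = (C⁻¹).trace := by ring
    rw [this]
  -- split into A and B parts
  have hsplit : (2 * X.trace - (Xᴴ * C * X).trace)
      = (t : ℂ) * (2 * X.trace - (Xᴴ * A * X).trace)
        + ((1 - t : ℝ) : ℂ) * (2 * X.trace - (Xᴴ * B * X).trace) := by
    have h1 : (t : ℂ) + ((1 - t : ℝ) : ℂ) = 1 := by push_cast; ring
    have : Xᴴ * C * X = (t : ℂ) • (Xᴴ * A * X) + ((1 - t : ℝ) : ℂ) • (Xᴴ * B * X) := by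
      rw [hcomb, mul_add, add_mul, Matrix.mul_smul, Matrix.smul_mul, Matrix.mul_smul,
        Matrix.smul_mul]
    rw [this, trace_add, trace_smul, trace_smul, smul_eq_mul, smul_eq_mul]
    have h2 : (2 : ℂ) * X.trace = ((t : ℂ) + ((1 - t : ℝ) : ℂ)) * (2 * X.trace) := by
      rw [h1, one_mul]
    linear_combination (-2 : ℂ) * X.trace * h1
  have hre : (2 * X.trace - (Xᴴ * C * X).trace).re
      = t * (2 * X.trace - (Xᴴ * A * X).trace).re
        + (1 - t) * (2 * X.trace - (Xᴴ * B * X).trace).re := by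
    rw [hsplit]
    simp [Complex.add_re, Complex.re_ofReal_mul]
  rw [htrC, hre]
  rcases hor with h | h
  · have h1 := key_lt hA hXH h
    have h2 := key_le hB hXH
    have := mul_lt_mul_of_pos_left h1 ht0
    have := mul_le_mul_of_nonneg_left h2 (by linarith : (0:ℝ) ≤ 1 - t)
    linarith
  · have h1 := key_le hA hXH
    have h2 := key_lt hB hXH h
    have := mul_le_mul_of_nonneg_left h1 ht0.le
    have := mul_lt_mul_of_pos_left h2 (by linarith : (0:ℝ) < 1 - t)
    linarith
end

section
/- Diagonal water-filling optimality: let λ₁,…,λ_N > 0 and P > 0. The minimum of Σᵢ 1/(1/λᵢ + fᵢ) over nonnegative reals f₁,…,f_N with Σᵢ fᵢ = P is attained at fᵢ = (k − 1/λᵢ)⁺, where k is the unique constant with Σᵢ (k − 1/λᵢ)⁺ = P, and the minimum value is Σᵢ λᵢ / ((k·λᵢ − 1)⁺ + 1). -/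
open Finset

/-- Diagonal water-filling optimality: for `λᵢ > 0` and `P > 0`, the minimum of
`Σᵢ 1/(1/λᵢ + fᵢ)` over nonnegative `fᵢ` with `Σᵢ fᵢ = P` is attained at
`fᵢ = (k − 1/λᵢ)⁺` where `k` satisfies `Σᵢ (k − 1/λᵢ)⁺ = P`, and the minimum value is
`Σᵢ λᵢ/((k·λᵢ − 1)⁺ + 1)`. -/
theorem stmt_6 {N : ℕ} (l : Fin N → ℝ) (hl : ∀ i, 0 < l i) (P : ℝ) (hP : 0 < P)
    (k : ℝ) (hk : ∑ i, max 0 (k - 1 / l i) = P) :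
    IsLeast {v : ℝ | ∃ f : Fin N → ℝ, (∀ i, 0 ≤ f i) ∧ (∑ i, f i = P) ∧
        v = ∑ i, 1 / (1 / l i + f i)}
      (∑ i, l i / (max 0 (k * l i - 1) + 1)) ∧
    (∑ i, 1 / (1 / l i + max 0 (k - 1 / l i)))
      = ∑ i, l i / (max 0 (k * l i - 1) + 1) := by
  have hg0 : ∀ i, 0 ≤ max 0 (k - 1 / l i) := fun i => le_max_left _ _
  have hk0 : 0 < k := by
    by_contra h
    push_neg at h
    have hz : ∀ i : Fin N, max 0 (k - 1 / l i) = 0 := fun i => by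
      have h1 : 0 < 1 / l i := by have := hl i; positivity
      exact max_eq_left (by linarith)
    have : (∑ i, max 0 (k - 1 / l i)) = 0 := Finset.sum_eq_zero fun i _ => hz i
    rw [hk] at this; linarith
  have heq : ∀ i, 1 / (1 / l i + max 0 (k - 1 / l i))
      = l i / (max 0 (k * l i - 1) + 1) := by
    intro i
    have hli := hl i
    have hline : l i ≠ 0 := ne_of_gt hli
    rcases le_or_gt k (1 / l i) with h | h
    · have hkl : k * l i ≤ 1 := by
        have := mul_le_mul_of_nonneg_right h hli.le
        rwa [one_div_mul_cancel hline] at this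
      rw [max_eq_left (by linarith), max_eq_left (by linarith)]
      field_simp
      ring
    · have hkl : 1 < k * l i := by
        have := mul_lt_mul_of_pos_right h hli
        rwa [one_div_mul_cancel hline] at this
      rw [max_eq_right (by linarith), max_eq_right (by linarith)]
      rw [show 1 / l i + (k - 1 / l i) = k by ring,
        show k * l i - 1 + 1 = k * l i by ring]
      rw [div_mul_eq_div_div_swap, div_self hline]
  have hsum_eq : (∑ i, 1 / (1 / l i + max 0 (k - 1 / l i)))
      = ∑ i, l i / (max 0 (k * l i - 1) + 1) :=
    Finset.sum_congr rfl fun i _ => heq i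
  refine ⟨⟨⟨fun i => max 0 (k - 1 / l i), hg0, hk, hsum_eq.symm⟩, ?_⟩, hsum_eq⟩
  rintro v ⟨f, hf0, hfsum, rfl⟩
  rw [← hsum_eq]
  have key : ∀ i, 1 / (1 / l i + max 0 (k - 1 / l i))
      ≤ 1 / (1 / l i + f i) + (f i - max 0 (k - 1 / l i)) / k ^ 2 := by
    intro i
    have hli := hl i
    have ha : 0 < 1 / l i := by positivity
    set a := 1 / l i with ha_def
    set gi := max 0 (k - a) with hgi
    have hgnn : 0 ≤ gi := le_max_left _ _
    have hb : 0 < a + gi := by linarith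
    have hc : 0 < a + f i := by linarith [hf0 i]
    have conv : 1 / (a + gi) ≤ 1 / (a + f i) + (f i - gi) / (a + gi) ^ 2 := by
      have h1 : 1 / (a + f i) + (f i - gi) / (a + gi) ^ 2 - 1 / (a + gi)
          = (f i - gi) ^ 2 / ((a + gi) ^ 2 * (a + f i)) := by
        field_simp
        ring
      nlinarith [div_nonneg (sq_nonneg (f i - gi))
        (by positivity : (0:ℝ) ≤ (a + gi) ^ 2 * (a + f i))]
    have hcmp : (f i - gi) / (a + gi) ^ 2 ≤ (f i - gi) / k ^ 2 := by
      rcases (hgnn).lt_or_eq with hpos | hzero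
      · have hka : 0 < k - a := by
          by_contra hcon
          push_neg at hcon
          rw [hgi, max_eq_left hcon] at hpos
          exact lt_irrefl _ hpos
        have : gi = k - a := by rw [hgi, max_eq_right hka.le]
        rw [this, show a + (k - a) = k by ring]
      · have hka : k ≤ a := by
          by_contra hcon
          push_neg at hcon
          have : gi = k - a := by rw [hgi, max_eq_right (by linarith)]
          rw [this] at hzero
          linarith
        rw [← hzero, add_zero]
        have hfnn : 0 ≤ f i - 0 := by simpa using hf0 i
        gcongr
    linarith
  calc ∑ i, 1 / (1 / l i + max 0 (k - 1 / l i))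
      ≤ ∑ i, (1 / (1 / l i + f i) + (f i - max 0 (k - 1 / l i)) / k ^ 2) :=
        Finset.sum_le_sum fun i _ => key i
    _ = (∑ i, 1 / (1 / l i + f i))
        + ((∑ i, f i) - ∑ i, max 0 (k - 1 / l i)) / k ^ 2 := by
        rw [Finset.sum_add_distrib, ← Finset.sum_div, Finset.sum_sub_distrib]
    _ = ∑ i, 1 / (1 / l i + f i) := by rw [hfsum, hk]; simp
end

section
/- The minimum over X ∈ ℂ^{N×T} (with T ≥ N) of Tr[(Σ⁻¹ + σ⁻² X X†)⁻¹] subject to Tr(X X†) = T·N·P₀ equals Σᵢ λᵢ/((λᵢ σ⁻² η − 1)⁺ + 1), where λᵢ are the eigenvalues of Σ and η is chosen so that Σᵢ (η − σ²/λᵢ)⁺ = T·N·P₀; the minimum is achieved by X = U P^{1/2} Ψ where Σ = UΛU†, P = diag((η − σ²/λᵢ)⁺), and Ψ ∈ ℂ^{N×T} is any matrix with orthonormal rows (ΨΨ† = I_N). -/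
open Matrix Finset
open scoped ComplexOrder


lemma diag_entry_real {n : ℕ} {M : Matrix (Fin n) (Fin n) ℂ} (hM : M.IsHermitian) (i : Fin n) :
    M i i = ((M i i).re : ℂ) := by
  have := hM.apply i i
  rw [Complex.ext_iff]
  constructor
  · simp
  · have him : (M i i).im = 0 := by
      have h2 := congrArg Complex.im this
      simp at h2
      linarith
    simp [him]

lemma diag_pos {n : ℕ} {M : Matrix (Fin n) (Fin n) ℂ} (hM : M.PosDef) (i : Fin n) :
    0 < (M i i).re := by
  have h := hM.dotProduct_mulVec_pos (x := Pi.single i 1) (by simp [Function.ne_iff])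
  have he : dotProduct (star (Pi.single i 1)) (M *ᵥ (Pi.single i 1 : Fin n → ℂ)) = M i i := by
    simp [dotProduct, mulVec, Pi.single_apply, Finset.sum_ite_eq]
  rw [he] at h
  simpa using (Complex.lt_def.mp h).1

lemma inv_diag_re_ge {n : ℕ} {M : Matrix (Fin n) (Fin n) ℂ} (hM : M.PosDef) (i : Fin n) :
    ((M i i).re)⁻¹ ≤ (M⁻¹ i i).re := by
  set s := (M i i).re with hsdef
  have hs : 0 < s := diag_pos hM i
  have hdet : IsUnit M.det := hM.det_pos.ne'.isUnit
  have hMM : M * M⁻¹ = 1 := mul_nonsing_inv M hdet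
  have hMM' : M⁻¹ * M = 1 := nonsing_inv_mul M hdet
  have hinvH : M⁻¹ᴴ = M⁻¹ := hM.isHermitian.inv
  set e : Fin n → ℂ := Pi.single i 1 with hedef
  have hstare : star e = e := by
    funext j
    simp [hedef, Pi.single_apply, apply_ite star]
  set a : Fin n → ℂ := M⁻¹ *ᵥ e with hadef
  have h1 : M *ᵥ a = e := by rw [hadef, mulVec_mulVec, hMM, one_mulVec]
  have hstara : star a = star e ᵥ* M⁻¹ := by rw [hadef, star_mulVec, hinvH]
  have h2 : star a ⬝ᵥ e = M⁻¹ i i := by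
    rw [hstara, ← dotProduct_mulVec, hstare, hedef]
    simp [mulVec_single, single_dotProduct]
  have h3 : star a ⬝ᵥ (M *ᵥ e) = 1 := by
    rw [hstara, ← dotProduct_mulVec, mulVec_mulVec, hMM', one_mulVec, hstare, hedef]
    simp [dotProduct_single, single_dotProduct, Pi.single_apply]
  have h4 : star e ⬝ᵥ e = 1 := by
    rw [hstare, hedef]; simp [dotProduct_single, Pi.single_apply]
  have h5 : star e ⬝ᵥ (M *ᵥ e) = ((s:ℝ) : ℂ) := by
    rw [hstare, hedef]
    simp only [mulVec_single, dotProduct_single, single_dotProduct, one_mul, mul_one,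
      Pi.single_eq_same]
    simpa using diag_entry_real hM.isHermitian i
  have h0 : 0 ≤ star (a - ((s:ℝ):ℂ)⁻¹ • e) ⬝ᵥ (M *ᵥ (a - ((s:ℝ):ℂ)⁻¹ • e)) :=
    hM.posSemidef.dotProduct_mulVec_nonneg _
  have hconj : star (((s:ℝ):ℂ)⁻¹) = ((s:ℝ):ℂ)⁻¹ := by
    simp [Complex.conj_ofReal, ← Complex.ofReal_inv]
  have expand : star (a - ((s:ℝ):ℂ)⁻¹ • e) ⬝ᵥ (M *ᵥ (a - ((s:ℝ):ℂ)⁻¹ • e))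
      = M⁻¹ i i - ((s:ℝ):ℂ)⁻¹ := by
    rw [mulVec_sub, mulVec_smul, h1, star_sub, star_smul, hconj]
    rw [sub_dotProduct, dotProduct_sub, dotProduct_sub, smul_dotProduct, smul_dotProduct,
      dotProduct_smul, dotProduct_smul, h2, h3, h4, h5]
    have hsne : ((s:ℝ):ℂ) ≠ 0 := by
      simp only [ne_eq, Complex.ofReal_eq_zero]
      exact hs.ne'
    simp only [smul_eq_mul]
    field_simp
    ring
  rw [expand] at h0
  have := (Complex.le_def.mp h0).1
  simp only [Complex.zero_re, Complex.sub_re, Complex.inv_re] at this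
  have hre : (((s:ℝ):ℂ)⁻¹).re = s⁻¹ := by
    rw [← Complex.ofReal_inv]; simp
  have h0' := (Complex.le_def.mp h0).1
  rw [Complex.zero_re, Complex.sub_re, hre] at h0'
  linarith

lemma conj_trace_inv {N : ℕ} {U : Matrix (Fin N) (Fin N) ℂ}
    (hU1 : U * Uᴴ = 1) (hU2 : Uᴴ * U = 1)
    {B : Matrix (Fin N) (Fin N) ℂ} (hB : IsUnit B.det) :
    ((U * B * Uᴴ)⁻¹).trace = B⁻¹.trace := by
  have hinv : (U * B * Uᴴ)⁻¹ = U * B⁻¹ * Uᴴ := by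
    apply inv_eq_right_inv
    have h1 : U * B * Uᴴ * (U * B⁻¹ * Uᴴ) = U * (B * ((Uᴴ * U) * (B⁻¹ * Uᴴ))) := by
      simp only [Matrix.mul_assoc]
    rw [h1, hU2, Matrix.one_mul, ← Matrix.mul_assoc B, mul_nonsing_inv _ hB,
      Matrix.one_mul, hU1]
  rw [hinv, Matrix.trace_mul_cycle, hU2, Matrix.one_mul]

lemma unitary_conj_add {N : ℕ} (U : Matrix (Fin N) (Fin N) ℂ)
    (A B : Matrix (Fin N) (Fin N) ℂ) (c : ℂ) :
    U * A * Uᴴ + c • (U * B * Uᴴ) = U * (A + c • B) * Uᴴ := by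
  rw [Matrix.mul_add, Matrix.add_mul, Matrix.mul_smul, Matrix.smul_mul]

lemma Sinv_eq {N : ℕ} {U : Matrix (Fin N) (Fin N) ℂ}
    (hU1 : U * Uᴴ = 1) (hU2 : Uᴴ * U = 1)
    {l : Fin N → ℝ} (hl : ∀ i, 0 < l i) {S : Matrix (Fin N) (Fin N) ℂ}
    (hS : S = U * Matrix.diagonal (fun i => (l i : ℂ)) * Uᴴ) :
    S⁻¹ = U * Matrix.diagonal (fun i => ((l i : ℂ))⁻¹) * Uᴴ := by
  rw [hS]
  apply inv_eq_right_inv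
  have h1 : U * diagonal (fun i => (l i:ℂ)) * Uᴴ * (U * diagonal (fun i => ((l i:ℂ))⁻¹) * Uᴴ)
      = U * (diagonal (fun i => (l i:ℂ)) * ((Uᴴ * U) * (diagonal (fun i => ((l i:ℂ))⁻¹) * Uᴴ))) := by
    simp only [Matrix.mul_assoc]
  rw [h1, hU2, Matrix.one_mul, ← Matrix.mul_assoc (diagonal _), diagonal_mul_diagonal]
  have h2 : (fun i => (l i:ℂ) * ((l i:ℂ))⁻¹) = fun _ => (1:ℂ) :=
    funext fun i => mul_inv_cancel₀ (Complex.ofReal_ne_zero.mpr (hl i).ne')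
  rw [h2, diagonal_one, Matrix.one_mul, hU1]

lemma waveform_calc {N T : ℕ} {U : Matrix (Fin N) (Fin N) ℂ}
    (hU1 : U * Uᴴ = 1) (hU2 : Uᴴ * U = 1)
    {l : Fin N → ℝ} (hl : ∀ i, 0 < l i) {S : Matrix (Fin N) (Fin N) ℂ}
    (hS : S = U * Matrix.diagonal (fun i => (l i : ℂ)) * Uᴴ)
    {σ : ℝ} (hσ : 0 < σ) (p : Fin N → ℝ) (hp : ∀ i, 0 ≤ p i)
    (Ψ : Matrix (Fin N) (Fin T) ℂ) (hΨ : Ψ * Ψᴴ = 1) :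
    ((U * Matrix.diagonal (fun i => (Real.sqrt (p i) : ℂ)) * Ψ) *
        (U * Matrix.diagonal (fun i => (Real.sqrt (p i) : ℂ)) * Ψ)ᴴ).trace
      = ((∑ i, p i : ℝ) : ℂ) ∧
    (((S⁻¹ + ((σ : ℂ) ^ 2)⁻¹ •
        ((U * Matrix.diagonal (fun i => (Real.sqrt (p i) : ℂ)) * Ψ) *
         (U * Matrix.diagonal (fun i => (Real.sqrt (p i) : ℂ)) * Ψ)ᴴ))⁻¹).trace).re
      = ∑ i, ((l i)⁻¹ + (σ^2)⁻¹ * p i)⁻¹ := by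
  set D : Matrix (Fin N) (Fin N) ℂ := diagonal (fun i => (Real.sqrt (p i) : ℂ)) with hD
  have hDH : Dᴴ = D := by
    rw [hD, diagonal_conjTranspose]
    have h : star (fun i => (Real.sqrt (p i):ℂ)) = fun i => (Real.sqrt (p i):ℂ) := by
      funext i
      simp [Pi.star_apply, Complex.star_def, Complex.conj_ofReal]
    rw [h]
  have hDD : D * D = diagonal (fun i => ((p i : ℝ):ℂ)) := by
    have h : (fun i => (Real.sqrt (p i):ℂ) * (Real.sqrt (p i):ℂ)) = fun i => ((p i:ℝ):ℂ) := by
      funext i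
      rw [← Complex.ofReal_mul, Real.mul_self_sqrt (hp i)]
    rw [hD, diagonal_mul_diagonal, h]
  have hA : (U * D * Ψ) * (U * D * Ψ)ᴴ = U * diagonal (fun i => ((p i:ℝ):ℂ)) * Uᴴ := by
    rw [Matrix.conjTranspose_mul, Matrix.conjTranspose_mul, hDH]
    calc U * D * Ψ * (Ψᴴ * (D * Uᴴ)) = U * (D * ((Ψ * Ψᴴ) * (D * Uᴴ))) := by
          simp only [Matrix.mul_assoc]
      _ = U * diagonal (fun i => ((p i:ℝ):ℂ)) * Uᴴ := by
          rw [hΨ, Matrix.one_mul, ← Matrix.mul_assoc D, hDD, ← Matrix.mul_assoc]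
  constructor
  · rw [hA, Matrix.trace_mul_cycle, hU2, Matrix.one_mul, Matrix.trace_diagonal]
    push_cast
    rfl
  · rw [hA, Sinv_eq hU1 hU2 hl hS, unitary_conj_add]
    set d : Fin N → ℝ := fun i => (l i)⁻¹ + (σ^2)⁻¹ * p i with hd
    have hd0 : ∀ i, 0 < d i := fun i => by
      have h1 := hl i; have h2 := hp i
      have : 0 < (l i)⁻¹ := by positivity
      have : 0 ≤ (σ^2)⁻¹ * p i := by positivity
      rw [hd]; dsimp only; linarith
    have hmid : diagonal (fun i => ((l i:ℂ))⁻¹) + ((σ:ℂ)^2)⁻¹ • diagonal (fun i => ((p i:ℝ):ℂ))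
        = diagonal (fun i => ((d i : ℝ) : ℂ)) := by
      rw [← diagonal_smul, diagonal_add]
      have h : (fun i => ((l i:ℂ))⁻¹ + (((σ:ℂ)^2)⁻¹ • fun i => ((p i:ℝ):ℂ)) i)
          = fun i => ((d i : ℝ) : ℂ) := by
        funext i
        rw [hd]
        push_cast
        simp [smul_eq_mul]
      rw [h]
    rw [hmid]
    have hdet : IsUnit (diagonal (fun i => ((d i : ℝ) : ℂ))).det := by
      rw [det_diagonal]
      exact isUnit_iff_ne_zero.mpr
        (Finset.prod_ne_zero_iff.mpr fun i _ => Complex.ofReal_ne_zero.mpr (hd0 i).ne')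
    have hdiaginv : (diagonal (fun i => ((d i : ℝ) : ℂ)))⁻¹
        = diagonal (fun i => (((d i)⁻¹ : ℝ) : ℂ)) := by
      apply inv_eq_right_inv
      rw [diagonal_mul_diagonal]
      have h : (fun i => ((d i:ℝ):ℂ) * (((d i)⁻¹:ℝ):ℂ)) = fun _ => (1:ℂ) := by
        funext i
        rw [← Complex.ofReal_mul, mul_inv_cancel₀ (hd0 i).ne']
        norm_num
      rw [h, diagonal_one]
    rw [conj_trace_inv hU1 hU2 hdet, hdiaginv, Matrix.trace_diagonal, Complex.re_sum]
    exact Finset.sum_congr rfl fun i _ => by rw [Complex.ofReal_re]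

-- scalar lemmas
lemma sc_tangent (q b : ℝ) (hq : 0 < q) (hb : 0 < b) : 1/b - (q-b)/b^2 ≤ 1/q := by
  rw [div_sub_div _ _ hb.ne' (by positivity), div_le_div_iff₀ (by positivity) hq]
  nlinarith [sq_nonneg (q - b)]

lemma sc_value (lam s η : ℝ) (hl : 0 < lam) (hs : 0 < s) :
    ((lam)⁻¹ + (s^2)⁻¹ * max 0 (η - s^2/lam))⁻¹
      = lam / (max 0 (lam * (s^2)⁻¹ * η - 1) + 1) := by
  have h2 : (0:ℝ) < s^2 := by positivity
  have key : lam * (s^2)⁻¹ * max 0 (η - s^2/lam) = max 0 (lam * (s^2)⁻¹ * η - 1) := by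
    rw [mul_max_of_nonneg _ _ (by positivity : (0:ℝ) ≤ lam * (s^2)⁻¹), mul_zero]
    congr 1
    field_simp
  rw [eq_div_iff (by positivity)]
  have hd : (0:ℝ) < (lam)⁻¹ + (s^2)⁻¹ * max 0 (η - s^2/lam) := by positivity
  rw [inv_mul_eq_div, div_eq_iff hd.ne', ← key]
  field_simp
  ring

lemma sc_bound (lam s η p : ℝ) (hl : 0 < lam) (hs : 0 < s) (hη : 0 < η) (hp : 0 ≤ p) :
    ((lam)⁻¹ + (s^2)⁻¹ * max 0 (η - s^2/lam))⁻¹ - (s^2/η^2) * (p - max 0 (η - s^2/lam))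
      ≤ ((lam)⁻¹ + (s^2)⁻¹ * p)⁻¹ := by
  set ps := max 0 (η - s^2/lam) with hps
  have hps0 : 0 ≤ ps := le_max_left _ _
  have hb : 0 < lam⁻¹ + (s^2)⁻¹ * ps := by positivity
  have hq : 0 < lam⁻¹ + (s^2)⁻¹ * p := by positivity
  have tang := sc_tangent (lam⁻¹ + (s^2)⁻¹*p) (lam⁻¹ + (s^2)⁻¹*ps) hq hb
  have hstep : ((lam⁻¹+(s^2)⁻¹*p) - (lam⁻¹+(s^2)⁻¹*ps))/(lam⁻¹+(s^2)⁻¹*ps)^2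
      ≤ (s^2/η^2) * (p - ps) := by
    rcases le_or_gt (s^2/lam) η with h | h
    · have hpse : ps = η - s^2/lam := max_eq_right (by linarith)
      rw [hpse]
      have hbe : lam⁻¹ + (s^2)⁻¹*(η - s^2/lam) = η/s^2 := by field_simp; ring
      rw [hbe]
      have heq : (lam⁻¹+(s^2)⁻¹*p - η/s^2)/(η/s^2)^2 = s^2/η^2 * (p - (η - s^2/lam)) := by
        field_simp
        ring
      rw [heq]
    · have hpse : ps = 0 := max_eq_left (sub_nonpos.mpr h.le)
      have hlη : η * lam < s^2 := (lt_div_iff₀ hl).mp h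
      rw [hpse]
      simp only [mul_zero, add_zero, sub_zero, add_sub_cancel_left]
      have key : lam^2*η^2 ≤ s^2*s^2 := by
        have h2 : (η*lam)*(η*lam) < s^2*s^2 :=
          mul_lt_mul'' hlη hlη (by positivity) (by positivity)
        nlinarith
      have e1 : (s^2)⁻¹ * p / (lam⁻¹)^2 = p * (lam^2/s^2) := by
        field_simp
      rw [e1, mul_comm (s^2/η^2) p]
      apply mul_le_mul_of_nonneg_left _ hp
      rw [div_le_div_iff₀ (by positivity) (by positivity)]
      linarith [key]
  calc (lam⁻¹ + (s^2)⁻¹*ps)⁻¹ - s^2/η^2 * (p - ps)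
      ≤ (lam⁻¹ + (s^2)⁻¹*ps)⁻¹ - ((lam⁻¹+(s^2)⁻¹*p) - (lam⁻¹+(s^2)⁻¹*ps))/(lam⁻¹+(s^2)⁻¹*ps)^2 := by
        linarith
    _ ≤ (lam⁻¹ + (s^2)⁻¹*p)⁻¹ := by
        simp only [one_div] at tang
        linarith [tang]

lemma lower_calc {N T : ℕ} {U : Matrix (Fin N) (Fin N) ℂ}
    (hU1 : U * Uᴴ = 1) (hU2 : Uᴴ * U = 1)
    {l : Fin N → ℝ} (hl : ∀ i, 0 < l i) {S : Matrix (Fin N) (Fin N) ℂ}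
    (hS : S = U * Matrix.diagonal (fun i => (l i : ℂ)) * Uᴴ)
    {σ : ℝ} (hσ : 0 < σ) (X : Matrix (Fin N) (Fin T) ℂ) :
    ∃ p : Fin N → ℝ, (∀ i, 0 ≤ p i) ∧ ((∑ i, p i : ℝ) : ℂ) = (X * Xᴴ).trace ∧
      ∑ i, ((l i)⁻¹ + (σ^2)⁻¹ * p i)⁻¹ ≤ (((S⁻¹ + ((σ:ℂ)^2)⁻¹ • (X * Xᴴ))⁻¹).trace).re := by
  set W : Matrix (Fin N) (Fin T) ℂ := Uᴴ * X with hW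
  have hX : X = U * W := by rw [hW, ← Matrix.mul_assoc, hU1, Matrix.one_mul]
  set p : Fin N → ℝ := fun i => ((W * Wᴴ) i i).re with hp
  have hsum : ∀ i, (W * Wᴴ) i i = ((∑ j, Complex.normSq (W i j) : ℝ) : ℂ) := by
    intro i
    rw [Matrix.mul_apply]
    push_cast
    refine Finset.sum_congr rfl fun j _ => ?_
    rw [Matrix.conjTranspose_apply, ← Complex.mul_conj]
    rfl
  have hpval : ∀ i, p i = ∑ j, Complex.normSq (W i j) := fun i => by
    rw [hp]; dsimp only; rw [hsum i, Complex.ofReal_re]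
  have hWd : ∀ i, (W * Wᴴ) i i = ((p i : ℝ) : ℂ) := fun i => by
    rw [hsum i, hpval i]
  have hp0 : ∀ i, 0 ≤ p i := fun i => by
    rw [hpval i]; exact Finset.sum_nonneg fun j _ => Complex.normSq_nonneg _
  refine ⟨p, hp0, ?_, ?_⟩
  · -- trace identity
    have hXX : X * Xᴴ = U * (W * Wᴴ) * Uᴴ := by
      rw [hX, Matrix.conjTranspose_mul]
      simp only [Matrix.mul_assoc]
    rw [hXX, Matrix.trace_mul_cycle, hU2, Matrix.one_mul]
    rw [Matrix.trace]
    simp only [Matrix.diag_apply]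
    rw [Finset.sum_congr rfl fun i _ => hWd i]
    push_cast
    rfl
  · -- lower bound
    set Mmid : Matrix (Fin N) (Fin N) ℂ :=
      diagonal (fun i => ((l i : ℂ))⁻¹) + ((σ:ℂ)^2)⁻¹ • (W * Wᴴ) with hM
    have hMpd : Mmid.PosDef := by
      rw [hM]
      apply Matrix.PosDef.add_posSemidef
      · apply Matrix.PosDef.diagonal
        intro i
        rw [← Complex.ofReal_inv]
        exact Complex.zero_lt_real.mpr (inv_pos.mpr (hl i))
      · have hZ : ((σ:ℂ)^2)⁻¹ • (W * Wᴴ)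
            = ((((σ⁻¹ : ℝ)) : ℂ) • W) * ((((σ⁻¹ : ℝ)) : ℂ) • W)ᴴ := by
          rw [Matrix.conjTranspose_smul, Matrix.smul_mul, Matrix.mul_smul, smul_smul]
          congr 1
          rw [Complex.star_def, Complex.conj_ofReal]
          push_cast
          rw [← mul_inv]
          ring_nf
        rw [hZ]
        exact posSemidef_self_mul_conjTranspose _
    have hXX : X * Xᴴ = U * (W * Wᴴ) * Uᴴ := by
      rw [hX, Matrix.conjTranspose_mul]
      simp only [Matrix.mul_assoc]
    have hconj : S⁻¹ + ((σ:ℂ)^2)⁻¹ • (X * Xᴴ) = U * Mmid * Uᴴ := by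
      rw [hXX, Sinv_eq hU1 hU2 hl hS, unitary_conj_add, hM]
    have hdet : IsUnit Mmid.det := (Matrix.isUnit_iff_isUnit_det _).mp hMpd.isUnit
    rw [hconj, conj_trace_inv hU1 hU2 hdet, Matrix.trace, Complex.re_sum]
    have hMdiag : ∀ i, (Mmid i i).re = (l i)⁻¹ + (σ^2)⁻¹ * p i := by
      intro i
      rw [hM]
      simp only [Matrix.add_apply, diagonal_apply_eq, Matrix.smul_apply, smul_eq_mul]
      rw [hWd i, ← Complex.ofReal_inv]
      have hc : ((σ:ℂ)^2)⁻¹ = (((σ^2)⁻¹ : ℝ) : ℂ) := by push_cast; ring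
      rw [hc, ← Complex.ofReal_mul, ← Complex.ofReal_add, Complex.ofReal_re]
    refine Finset.sum_le_sum fun i _ => ?_
    have h1 := inv_diag_re_ge hMpd i
    rw [hMdiag i] at h1
    simpa using h1

/-- Sensing-optimal waveform: the minimum over `X ∈ ℂ^{N×T}` (`T ≥ N`) of
`Tr[(Σ⁻¹ + σ⁻² X X†)⁻¹]` subject to `Tr(X X†) = T·N·P₀` equals
`Σᵢ λᵢ/((λᵢ σ⁻² η − 1)⁺ + 1)`, where `Σ = UΛU†` with eigenvalues `λᵢ` and `η` satisfies
`Σᵢ (η − σ²/λᵢ)⁺ = T·N·P₀`; the minimum is achieved by `X = U P^{1/2} Ψ` with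
`P = diag((η − σ²/λᵢ)⁺)` and any `Ψ` with orthonormal rows (`ΨΨ† = I`). -/
theorem stmt_9 {N T : ℕ} (hT : N ≤ T)
    (U : Matrix (Fin N) (Fin N) ℂ) (hU : U ∈ Matrix.unitaryGroup (Fin N) ℂ)
    (l : Fin N → ℝ) (hl : ∀ i, 0 < l i)
    (S : Matrix (Fin N) (Fin N) ℂ)
    (hS : S = U * Matrix.diagonal (fun i => (l i : ℂ)) * Uᴴ)
    (σ P₀ η : ℝ) (hσ : 0 < σ) (hP₀ : 0 < P₀)
    (hη : ∑ i, max 0 (η - σ ^ 2 / l i) = T * N * P₀) :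
    IsLeast {v : ℝ | ∃ X : Matrix (Fin N) (Fin T) ℂ,
        (X * Xᴴ).trace = ((T * N * P₀ : ℝ) : ℂ) ∧
        v = (((S⁻¹ + ((σ : ℂ) ^ 2)⁻¹ • (X * Xᴴ))⁻¹).trace).re}
      (∑ i, l i / (max 0 (l i * (σ ^ 2)⁻¹ * η - 1) + 1)) ∧
    ∀ Ψ : Matrix (Fin N) (Fin T) ℂ, Ψ * Ψᴴ = 1 →
      ((U * Matrix.diagonal (fun i => (Real.sqrt (max 0 (η - σ ^ 2 / l i)) : ℂ)) * Ψ) *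
          (U * Matrix.diagonal (fun i => (Real.sqrt (max 0 (η - σ ^ 2 / l i)) : ℂ)) * Ψ)ᴴ).trace
        = ((T * N * P₀ : ℝ) : ℂ) ∧
      (((S⁻¹ + ((σ : ℂ) ^ 2)⁻¹ •
          ((U * Matrix.diagonal (fun i => (Real.sqrt (max 0 (η - σ ^ 2 / l i)) : ℂ)) * Ψ) *
           (U * Matrix.diagonal (fun i => (Real.sqrt (max 0 (η - σ ^ 2 / l i)) : ℂ)) * Ψ)ᴴ))⁻¹).trace).re
        = ∑ i, l i / (max 0 (l i * (σ ^ 2)⁻¹ * η - 1) + 1) := by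
  have hU1 : U * Uᴴ = 1 := by
    have h := Matrix.mem_unitaryGroup_iff.mp hU
    rwa [Matrix.star_eq_conjTranspose] at h
  have hU2 : Uᴴ * U = 1 := by
    have h := Matrix.mem_unitaryGroup_iff'.mp hU
    rwa [Matrix.star_eq_conjTranspose] at h
  have part2 : ∀ Ψ : Matrix (Fin N) (Fin T) ℂ, Ψ * Ψᴴ = 1 →
      ((U * Matrix.diagonal (fun i => (Real.sqrt (max 0 (η - σ ^ 2 / l i)) : ℂ)) * Ψ) *
          (U * Matrix.diagonal (fun i => (Real.sqrt (max 0 (η - σ ^ 2 / l i)) : ℂ)) * Ψ)ᴴ).trace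
        = ((T * N * P₀ : ℝ) : ℂ) ∧
      (((S⁻¹ + ((σ : ℂ) ^ 2)⁻¹ •
          ((U * Matrix.diagonal (fun i => (Real.sqrt (max 0 (η - σ ^ 2 / l i)) : ℂ)) * Ψ) *
           (U * Matrix.diagonal (fun i => (Real.sqrt (max 0 (η - σ ^ 2 / l i)) : ℂ)) * Ψ)ᴴ))⁻¹).trace).re
        = ∑ i, l i / (max 0 (l i * (σ ^ 2)⁻¹ * η - 1) + 1) := by
    intro Ψ hΨ
    obtain ⟨h1, h2⟩ := waveform_calc hU1 hU2 hl hS hσ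
        (fun i => max 0 (η - σ ^ 2 / l i)) (fun i => le_max_left _ _) Ψ hΨ
    constructor
    · rw [h1, hη]
    · rw [h2]
      exact Finset.sum_congr rfl fun i _ => sc_value (l i) σ η (hl i) hσ
  refine ⟨⟨?_, ?_⟩, part2⟩
  · -- membership
    set Ψ₀ : Matrix (Fin N) (Fin T) ℂ :=
      Matrix.of fun i j => if (Fin.castLE hT i : Fin T) = j then 1 else 0 with hΨ₀
    have hΨ : Ψ₀ * Ψ₀ᴴ = 1 := by
      ext i k
      simp only [Matrix.mul_apply, Matrix.conjTranspose_apply, hΨ₀, Matrix.of_apply]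
      rw [Finset.sum_eq_single (Fin.castLE hT i)]
      · simp only [if_pos rfl, one_mul]
        by_cases h : i = k
        · subst h
          simp [Matrix.one_apply]
        · have hne : ¬ (Fin.castLE hT k = Fin.castLE hT i) := fun hc =>
            h ((Fin.castLE_injective hT) hc).symm
          simp [hne, Matrix.one_apply, h]
      · intro j _ hj
        rw [if_neg (fun hc => hj hc.symm), zero_mul]
      · intro h
        exact absurd (Finset.mem_univ _) h
    obtain ⟨h1, h2⟩ := part2 Ψ₀ hΨ
    exact ⟨_, h1, h2.symm⟩
  · -- lower bound
    rintro v ⟨X, hX1, hX2⟩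
    by_cases hN : N = 0
    · subst hN
      simp only [Finset.univ_eq_empty, Finset.sum_empty]
      rw [hX2]
      simp [Matrix.trace]
    · have hNpos : 0 < N := Nat.pos_of_ne_zero hN
      have hT0 : 0 < T := lt_of_lt_of_le hNpos hT
      have hc1 : (0:ℝ) < (T:ℝ) := Nat.cast_pos.mpr hT0
      have hc2 : (0:ℝ) < (N:ℝ) := Nat.cast_pos.mpr hNpos
      have hTN : (0:ℝ) < T * N * P₀ := by positivity
      have hηpos : 0 < η := by
        by_contra hcon
        push_neg at hcon
        have hz : ∀ i ∈ Finset.univ, max 0 (η - σ^2 / l i) = 0 := fun i _ => max_eq_left (by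
          have h3 : 0 < σ^2 / l i := div_pos (by positivity) (hl i)
          linarith)
        rw [Finset.sum_congr rfl hz, Finset.sum_const_zero] at hη
        linarith
      obtain ⟨p, hp0, hptrace, hpbound⟩ := lower_calc hU1 hU2 hl hS hσ X
      have hsum_p : ∑ i, p i = T * N * P₀ := by
        have h := hptrace.trans hX1
        exact_mod_cast h
      rw [hX2]
      calc ∑ i, l i / (max 0 (l i * (σ^2)⁻¹ * η - 1) + 1)
          = ∑ i, ((l i)⁻¹ + (σ^2)⁻¹ * max 0 (η - σ^2 / l i))⁻¹ :=
            Finset.sum_congr rfl fun i _ => (sc_value (l i) σ η (hl i) hσ).symm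
        _ ≤ ∑ i, ((l i)⁻¹ + (σ^2)⁻¹ * p i)⁻¹ := by
            have key : ∑ i, ((l i)⁻¹ + (σ^2)⁻¹ * max 0 (η - σ^2/l i))⁻¹
                ≤ ∑ i, (((l i)⁻¹ + (σ^2)⁻¹ * p i)⁻¹
                    + (σ^2/η^2) * (p i - max 0 (η - σ^2/l i))) :=
              Finset.sum_le_sum fun i _ => by
                linarith [sc_bound (l i) σ η (p i) (hl i) hσ hηpos (hp0 i)]
            rw [Finset.sum_add_distrib, ← Finset.mul_sum, Finset.sum_sub_distrib,
              hη, hsum_p] at key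
            simpa using key
        _ ≤ (((S⁻¹ + ((σ:ℂ)^2)⁻¹ • (X * Xᴴ))⁻¹).trace).re := hpbound
end
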